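/- Lower bound on the lasso fit from the Karush–Kuhn–Tucker conditions (Remark 3.1 / equation in the proof of Lemma 3.1): Let c > 1, λ > 0, and suppose λ ≥ c·n·‖S‖_∞. Then any lasso estimator β̂, with T̂ = supp(β̂) and m̂ = |T̂ \ T|, satisfies (1 − 1/c)·λ·√|T̂| ≤ 2n·√φ(m̂)·((1/n)∑_{i} (x_i'β̂ − f_i)²)^{1/2}. -/

import Mathlib

open Finset MeasureTheory ProbabilityTheory

noncomputable section

/-- Prediction norm `‖δ‖_{2,n} = ((1/n) ∑_i (x_i'δ)²)^{1/2}`. -/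
def predNorm (n p : ℕ) (x : Fin n → Fin p → ℝ) (δ : Fin p → ℝ) : ℝ :=
  Real.sqrt ((n : ℝ)⁻¹ * ∑ i, (∑ j, x i j * δ j) ^ 2)

/-- Least-squares criterion `Q̂(β) = (1/n) ∑_i (y_i - x_i'β)²`. -/
def Qls (n p : ℕ) (x : Fin n → Fin p → ℝ) (y : Fin n → ℝ) (β : Fin p → ℝ) : ℝ :=
  (n : ℝ)⁻¹ * ∑ i, (y i - ∑ j, x i j * β j) ^ 2

/-- ℓ1-norm on `ℝ^p`. -/
def l1 {p : ℕ} (v : Fin p → ℝ) : ℝ := ∑ j, |v j|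

/-- sup-norm (max-absolute-coordinate norm) on `ℝ^p`. -/
def supNorm {p : ℕ} (v : Fin p → ℝ) : ℝ := ⨆ j, |v j|

/-- `restr A δ` is `δ` with coordinates outside `A` set to `0`. -/
def restr {p : ℕ} (A : Finset (Fin p)) (δ : Fin p → ℝ) : Fin p → ℝ :=
  fun j => if j ∈ A then δ j else 0

/-- Support of a vector, as a finset. -/
def suppF {p : ℕ} (v : Fin p → ℝ) : Finset (Fin p) :=
  Finset.univ.filter (fun j => v j ≠ 0)

/-- Restricted eigenvalue `κ(c̄)`. -/
def kappaRE (n p : ℕ) (x : Fin n → Fin p → ℝ) (T : Finset (Fin p)) (cbar : ℝ) : ℝ :=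
  sInf {r : ℝ | ∃ δ : Fin p → ℝ, δ ≠ 0 ∧ l1 (restr Tᶜ δ) ≤ cbar * l1 (restr T δ) ∧
    r = Real.sqrt T.card * predNorm n p x δ / l1 (restr T δ)}

/-- Restricted sparse maximal eigenvalue `φ(m)`. -/
def phiRSE (n p : ℕ) (x : Fin n → Fin p → ℝ) (T : Finset (Fin p)) (m : ℕ) : ℝ :=
  sSup {r : ℝ | ∃ δ : Fin p → ℝ, δ ≠ 0 ∧ (suppF (restr Tᶜ δ)).card ≤ m ∧
    r = (predNorm n p x δ) ^ 2 / ∑ j, δ j ^ 2}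

/-- Restricted sparse minimal eigenvalue `κ̃(m)²`. -/
def kappaTildeSq (n p : ℕ) (x : Fin n → Fin p → ℝ) (T : Finset (Fin p)) (m : ℕ) : ℝ :=
  sInf {r : ℝ | ∃ δ : Fin p → ℝ, δ ≠ 0 ∧ (suppF (restr Tᶜ δ)).card ≤ m ∧
    r = (predNorm n p x δ) ^ 2 / ∑ j, δ j ^ 2}

/-- The condition number `μ(m) = √φ(m)/κ̃(m)`. -/
def muCond (n p : ℕ) (x : Fin n → Fin p → ℝ) (T : Finset (Fin p)) (m : ℕ) : ℝ :=
  Real.sqrt (phiRSE n p x T m) / Real.sqrt (kappaTildeSq n p x T m)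

set_option maxHeartbeats 600000 in
/-- Remark 3.1: lower bound on the lasso fit from the KKT conditions. -/
theorem lasso_fit_lower_bound
    (n p : ℕ) (hn : 0 < n) (hp : 0 < p)
    (x : Fin n → Fin p → ℝ) (y f : Fin n → ℝ)
    (hx : ∀ j, (n : ℝ)⁻¹ * ∑ i, x i j ^ 2 = 1)
    (β0 : Fin p → ℝ) (T : Finset (Fin p)) (hT : T = suppF β0)
    (c : ℝ) (hc : 1 < c)
    (S : Fin p → ℝ) (hS : S = fun j => (2 / n : ℝ) * ∑ i, (y i - f i) * x i j)
    (lam : ℝ) (hlam : 0 < lam) (hlamS : c * n * supNorm S ≤ lam)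
    (βhat : Fin p → ℝ)
    (hβhat : ∀ β : Fin p → ℝ,
      Qls n p x y βhat + lam / n * l1 βhat ≤ Qls n p x y β + lam / n * l1 β)
    (That : Finset (Fin p)) (hThat : That = suppF βhat)
    (mhat : ℕ) (hmhat : mhat = (That \ T).card) :
    (1 - 1 / c) * lam * Real.sqrt That.card ≤
      2 * n * Real.sqrt (phiRSE n p x T mhat) *
        Real.sqrt ((n : ℝ)⁻¹ * ∑ i, ((∑ j, x i j * βhat j) - f i) ^ 2) := by
  have hn' : (0:ℝ) < n := by exact_mod_cast hn
  have hnne : (n:ℝ) ≠ 0 := ne_of_gt hn'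
  have hc0 : (0:ℝ) < c := lt_trans one_pos hc
  have h1cpos : (0:ℝ) < 1 - 1/c := by
    have : 1/c < 1 := (div_lt_one hc0).mpr hc
    linarith
  have h1c : (0:ℝ) ≤ 1 - 1/c := h1cpos.le
  set u : Fin n → ℝ := fun i => (∑ j, x i j * βhat j) - f i with hu
  set w : Fin p → ℝ := fun j => ∑ i, u i * x i j with hw
  -- Step 1 : KKT conditions
  have kkt : ∀ j, βhat j ≠ 0 →
      lam / (n:ℝ) ≤ |(2/(n:ℝ)) * ∑ i, (y i - ∑ k, x i k * βhat k) * x i j| := by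
    intro j hj
    set G : ℝ := (2/(n:ℝ)) * ∑ i, (y i - ∑ k, x i k * βhat k) * x i j with hG
    set s : ℝ := if 0 < βhat j then 1 else -1 with hs
    have hs2' : s ^ 2 = 1 := by rw [hs]; split_ifs <;> norm_num
    have habs_s : |s| = 1 := by rw [hs]; split_ifs <;> norm_num
    have hsb : s * βhat j = |βhat j| := by
      rw [hs]; split_ifs with h
      · rw [abs_of_pos h]; ring
      · rw [abs_of_neg (lt_of_le_of_ne (not_lt.mp h) hj)]; ring
    have hxjN : ∑ i, x i j ^ 2 = (n:ℝ) := by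
      have h := hx j
      field_simp at h
      linarith
    have key : ∀ ε : ℝ, 0 < ε → ε < |βhat j| → lam / (n:ℝ) ≤ s * G + ε := by
      intro ε hε hεb
      set β' : Fin p → ℝ := fun k => βhat k - if k = j then s * ε else 0 with hβ'
      have hin : ∀ i, y i - ∑ k, x i k * β' k
          = (y i - ∑ k, x i k * βhat k) + s * ε * x i j := by
        intro i
        have h1 : ∑ k, x i k * β' k
            = (∑ k, x i k * βhat k) - x i j * (s * ε) := by
          simp only [hβ', mul_sub, Finset.sum_sub_distrib, mul_ite, mul_zero,
            Finset.sum_ite_eq', Finset.mem_univ, if_true]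
        rw [h1]; ring
      have hQ : Qls n p x y β' = Qls n p x y βhat + s * ε * G + ε ^ 2 := by
        unfold Qls
        simp_rw [hin]
        have hexp : ∀ i, ((y i - ∑ k, x i k * βhat k) + s * ε * x i j) ^ 2
            = (y i - ∑ k, x i k * βhat k) ^ 2
              + s * ε * (2 * ((y i - ∑ k, x i k * βhat k) * x i j))
              + ε ^ 2 * x i j ^ 2 := by
          intro i
          linear_combination (ε ^ 2 * (x i j) ^ 2) * hs2'
        simp_rw [hexp, Finset.sum_add_distrib, ← Finset.mul_sum]
        rw [hxjN, hG]
        field_simp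
      have hl1 : l1 β' = l1 βhat - ε := by
        unfold l1
        have habsj : |βhat j - s * ε| = |βhat j| - ε := by
          have h1 : βhat j - s * ε = s * (|βhat j| - ε) := by
            rw [← hsb, mul_sub, ← mul_assoc, ← sq, hs2', one_mul]
          rw [h1, abs_mul, habs_s, one_mul, abs_of_pos (by linarith)]
        have hterm : ∀ k, |β' k| = |βhat k| - if k = j then ε else 0 := by
          intro k
          by_cases hk : k = j
          · subst hk; simp only [hβ', if_true]; rw [habsj]
          · simp [hβ', hk]
        simp_rw [hterm, Finset.sum_sub_distrib, Finset.sum_ite_eq',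
          Finset.mem_univ, if_true]
      have hmin := hβhat β'
      rw [hQ, hl1] at hmin
      have hstep : lam / (n:ℝ) * ε ≤ (s * G + ε) * ε := by nlinarith [hmin]
      exact le_of_mul_le_mul_right hstep hε
    have h2 : lam / (n:ℝ) ≤ s * G := by
      by_contra hcon
      push_neg at hcon
      have hb0 : 0 < |βhat j| := abs_pos.mpr hj
      set ε : ℝ := min ((lam / (n:ℝ) - s * G)/2) (|βhat j|/2) with hε
      have hε0 : 0 < ε := lt_min (by linarith) (by linarith)
      have hεb : ε < |βhat j| := lt_of_le_of_lt (min_le_right _ _) (by linarith)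
      have h3 := key ε hε0 hεb
      have h4 : ε ≤ (lam / (n:ℝ) - s * G)/2 := min_le_left _ _
      linarith
    calc lam / (n:ℝ) ≤ s * G := h2
      _ ≤ |s * G| := le_abs_self _
      _ = |G| := by rw [abs_mul, habs_s, one_mul]
  -- Step 2 : per-coordinate bound on the support of βhat
  have hGS : ∀ j, (2/(n:ℝ)) * ∑ i, (y i - ∑ k, x i k * βhat k) * x i j
      = S j - 2/(n:ℝ) * w j := by
    intro j
    have hterm : ∀ i, (y i - ∑ k, x i k * βhat k) * x i j
        = (y i - f i) * x i j - u i * x i j := by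
      intro i; simp only [hu]; ring
    simp_rw [hterm, Finset.sum_sub_distrib, hS, hw]
    ring
  have step2 : ∀ j ∈ That, (1 - 1/c) * lam ≤ 2 * |w j| := by
    intro j hj
    have hjne : βhat j ≠ 0 := by
      rw [hThat] at hj
      simpa [suppF] using hj
    have h1 := kkt j hjne
    rw [hGS j] at h1
    have hSb : |S j| ≤ lam / (c * n) := by
      have hb : |S j| ≤ supNorm S := by
        unfold supNorm
        exact le_ciSup (Set.Finite.bddAbove (Set.finite_range fun k => |S k|)) j
      have hsup : supNorm S ≤ lam / (c * n) := by
        rw [le_div_iff₀ (by positivity)]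
        nlinarith [hlamS]
      linarith
    have htri : |S j - 2/(n:ℝ) * w j| ≤ |S j| + 2/(n:ℝ) * |w j| := by
      rw [sub_eq_add_neg]
      refine (abs_add_le _ _).trans ?_
      rw [abs_neg, abs_mul, abs_of_pos (by positivity : (0:ℝ) < 2/(n:ℝ))]
    have hcn : lam / (n:ℝ) - lam / (c * n) ≤ 2/(n:ℝ) * |w j| := by linarith
    have heq : (1 - 1/c) * lam = (lam / (n:ℝ) - lam / (c * (n:ℝ))) * n := by
      field_simp
    rw [heq]
    calc (lam / (n:ℝ) - lam / (c * (n:ℝ))) * n ≤ (2/(n:ℝ) * |w j|) * n :=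
          mul_le_mul_of_nonneg_right hcn hn'.le
      _ = 2 * |w j| := by field_simp
  -- the goal's sum equals ∑ u i ^ 2
  have hU : ∑ i, ((∑ j, x i j * βhat j) - f i) ^ 2 = ∑ i, u i ^ 2 := by
    simp only [hu]
  rw [hU]
  have hU0 : (0:ℝ) ≤ ∑ i, u i ^ 2 := by positivity
  -- trivial case
  by_cases hTe : That = ∅
  · rw [hTe]
    simp only [Finset.card_empty, Nat.cast_zero, Real.sqrt_zero, mul_zero]
    positivity
  -- main case
  have hTne : That.Nonempty := Finset.nonempty_of_ne_empty hTe
  have hwne : ∀ j ∈ That, w j ≠ 0 := by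
    intro j hj h0
    have h2 := step2 j hj
    rw [h0, abs_zero, mul_zero] at h2
    nlinarith [mul_pos h1cpos hlam]
  set δ : Fin p → ℝ := restr That w with hδ
  have hδne : δ ≠ 0 := by
    obtain ⟨j, hj⟩ := hTne
    intro h0
    apply hwne j hj
    have := congrFun h0 j
    simpa [hδ, restr, hj] using this
  set A : ℝ := ∑ j ∈ That, w j ^ 2 with hA
  have hA_eq : ∑ j, δ j ^ 2 = A := by
    rw [hA]
    have : ∀ j, δ j ^ 2 = if j ∈ That then w j ^ 2 else 0 := by
      intro j; simp only [hδ, restr]; split_ifs <;> simp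
    simp_rw [this]
    rw [Finset.sum_ite_mem, Finset.univ_inter]
  have hA_pos : 0 < A := by
    rw [hA]
    refine Finset.sum_pos (fun j hj => ?_) hTne
    have := hwne j hj
    positivity
  -- sparse support condition
  have hsupp : (suppF (restr Tᶜ δ)).card ≤ mhat := by
    rw [hmhat]
    apply Finset.card_le_card
    intro j hj
    simp only [suppF, Finset.mem_filter, Finset.mem_univ, true_and] at hj
    simp only [restr] at hj
    rw [Finset.mem_sdiff]
    by_cases hjT : j ∈ Tᶜ
    · rw [if_pos hjT] at hj
      constructor
      · by_contra hjThat
        simp [hδ, restr, hjThat] at hj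
      · exact Finset.mem_compl.mp hjT
    · rw [if_neg hjT] at hj
      exact absurd rfl hj
  -- φ(mhat) bounds the Rayleigh quotient
  have hbdd : BddAbove {r : ℝ | ∃ v : Fin p → ℝ, v ≠ 0 ∧ (suppF (restr Tᶜ v)).card ≤ mhat ∧
      r = (predNorm n p x v) ^ 2 / ∑ j, v j ^ 2} := by
    refine ⟨p, fun r hr => ?_⟩
    obtain ⟨v, hv0, -, rfl⟩ := hr
    have hD : 0 < ∑ j, v j ^ 2 := by
      rcases Function.ne_iff.mp hv0 with ⟨j0, hj0⟩
      refine Finset.sum_pos' (fun j _ => sq_nonneg _) ⟨j0, Finset.mem_univ _, ?_⟩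
      simpa using pow_pos (abs_pos.mpr hj0) 2
    rw [div_le_iff₀ hD]
    have hp2 : (predNorm n p x v) ^ 2 = (n:ℝ)⁻¹ * ∑ i, (∑ j, x i j * v j) ^ 2 := by
      unfold predNorm
      exact Real.sq_sqrt (by positivity)
    rw [hp2]
    calc (n:ℝ)⁻¹ * ∑ i, (∑ j, x i j * v j) ^ 2
        ≤ (n:ℝ)⁻¹ * ∑ i, (∑ j, x i j ^ 2) * ∑ j, v j ^ 2 := by
          refine mul_le_mul_of_nonneg_left (Finset.sum_le_sum fun i _ => ?_) (by positivity)
          exact Finset.sum_mul_sq_le_sq_mul_sq _ _ _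
      _ = (∑ j, (n:ℝ)⁻¹ * ∑ i, x i j ^ 2) * ∑ j, v j ^ 2 := by
          rw [← Finset.sum_mul, ← Finset.mul_sum, Finset.sum_comm]
          ring
      _ = (p:ℝ) * ∑ j, v j ^ 2 := by
          simp_rw [hx]
          simp
  set Φ : ℝ := phiRSE n p x T mhat with hΦ
  have hφ_ge : (predNorm n p x δ) ^ 2 / A ≤ Φ := by
    have hmem : (predNorm n p x δ) ^ 2 / A ∈
        {r : ℝ | ∃ v : Fin p → ℝ, v ≠ 0 ∧ (suppF (restr Tᶜ v)).card ≤ mhat ∧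
          r = (predNorm n p x v) ^ 2 / ∑ j, v j ^ 2} := ⟨δ, hδne, hsupp, by rw [hA_eq]⟩
    exact le_csSup hbdd hmem
  have hφ0 : 0 ≤ Φ := le_trans (by positivity) hφ_ge
  have hXδA : ∑ i, (∑ j, x i j * δ j) ^ 2 ≤ (n:ℝ) * (Φ * A) := by
    have h1 : (predNorm n p x δ) ^ 2 ≤ Φ * A := (div_le_iff₀ hA_pos).mp hφ_ge
    have hp2 : (predNorm n p x δ) ^ 2 = (n:ℝ)⁻¹ * ∑ i, (∑ j, x i j * δ j) ^ 2 := by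
      unfold predNorm
      exact Real.sq_sqrt (by positivity)
    rw [hp2] at h1
    calc ∑ i, (∑ j, x i j * δ j) ^ 2
        = (n:ℝ) * ((n:ℝ)⁻¹ * ∑ i, (∑ j, x i j * δ j) ^ 2) := by field_simp
      _ ≤ (n:ℝ) * (Φ * A) := mul_le_mul_of_nonneg_left h1 hn'.le
  -- Cauchy-Schwarz
  have hA1 : A = ∑ j, δ j * w j := by
    have : ∀ j, δ j * w j = if j ∈ That then w j ^ 2 else 0 := by
      intro j; simp only [hδ, restr]; split_ifs <;> simp [sq]
    simp_rw [this]
    rw [Finset.sum_ite_mem, Finset.univ_inter, hA]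
  have hA2 : ∑ j, δ j * w j = ∑ i, u i * ∑ j, x i j * δ j := by
    simp only [hw]
    simp_rw [Finset.mul_sum]
    rw [Finset.sum_comm]
    exact Finset.sum_congr rfl fun i _ => Finset.sum_congr rfl fun j _ => by ring
  have hCS : A ^ 2 ≤ (∑ i, u i ^ 2) * (∑ i, (∑ j, x i j * δ j) ^ 2) := by
    rw [hA1, hA2]
    exact Finset.sum_mul_sq_le_sq_mul_sq _ _ _
  have hA_le : A ≤ (n:ℝ) * Φ * (∑ i, u i ^ 2) := by
    have h := hCS.trans (mul_le_mul_of_nonneg_left hXδA hU0)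
    nlinarith [h, hA_pos]
  -- summing the squared per-coordinate bounds
  have hsum2 : ((1 - 1/c) * lam) ^ 2 * (That.card : ℝ) ≤ 4 * A := by
    have h := Finset.card_nsmul_le_sum That (fun j => 4 * w j ^ 2) (((1 - 1/c) * lam) ^ 2)
      (fun j hj => by
        have h2 := step2 j hj
        have h3 : ((1 - 1/c) * lam) ^ 2 ≤ (2 * |w j|) ^ 2 :=
          pow_le_pow_left₀ (mul_nonneg h1c hlam.le) h2 2
        nlinarith [sq_abs (w j)])
    rw [nsmul_eq_mul] at h
    rw [hA]
    rw [Finset.mul_sum]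
    linarith [h]
  -- final assembly
  have hfin : ((1 - 1/c) * lam) ^ 2 * (That.card : ℝ)
      ≤ (2 * (n:ℝ)) ^ 2 * Φ * ((n:ℝ)⁻¹ * ∑ i, u i ^ 2) := by
    have heq : (2 * (n:ℝ)) ^ 2 * Φ * ((n:ℝ)⁻¹ * ∑ i, u i ^ 2)
        = 4 * ((n:ℝ) * Φ * (∑ i, u i ^ 2)) := by
      field_simp
      ring
    rw [heq]
    linarith
  calc (1 - 1/c) * lam * Real.sqrt That.card
      = Real.sqrt (((1 - 1/c) * lam) ^ 2 * (That.card : ℝ)) := by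
        rw [Real.sqrt_mul (sq_nonneg _), Real.sqrt_sq (mul_nonneg h1c hlam.le)]
    _ ≤ Real.sqrt ((2 * (n:ℝ)) ^ 2 * Φ * ((n:ℝ)⁻¹ * ∑ i, u i ^ 2)) :=
        Real.sqrt_le_sqrt hfin
    _ = 2 * (n:ℝ) * Real.sqrt Φ * Real.sqrt ((n:ℝ)⁻¹ * ∑ i, u i ^ 2) := by
        rw [Real.sqrt_mul (by positivity), Real.sqrt_mul (sq_nonneg _),
          Real.sqrt_sq (by positivity)]
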